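/- For all integers n and r with r ≥ 3, every r-uniform hypergraph on n vertices containing no Berge-path of length r+1 has at most n hyperedges (i.e., the upper bound (n/k)·C(k,r) with k = r+1 holds in the case k = r+1 as well). -/

import Mathlib

set_option linter.unusedSectionVars false


open scoped Classical

/-- A Berge-path of length `t` in the hypergraph `H` (a family of hyperedges):
an alternating sequence of `t+1` distinct vertices and `t` distinct hyperedges
`v₁, e₁, …, e_t, v_{t+1}` with `vᵢ, vᵢ₊₁ ∈ eᵢ`. -/
structure BergePath {V : Type*} (H : Finset (Finset V)) (t : ℕ) where
  verts : Fin (t + 1) → V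
  edges : Fin t → Finset V
  verts_inj : Function.Injective verts
  edges_inj : Function.Injective edges
  edges_mem : ∀ i, edges i ∈ H
  fst_mem : ∀ i : Fin t, verts i.castSucc ∈ edges i
  snd_mem : ∀ i : Fin t, verts i.succ ∈ edges i

/-- A Berge-cycle of length `t` in the hypergraph `H`: `t` distinct vertices and
`t` distinct hyperedges with `vᵢ, vᵢ₊₁ ∈ eᵢ`, indices mod `t`. -/
structure BergeCycle {V : Type*} (H : Finset (Finset V)) (t : ℕ) where
  verts : Fin t → V
  edges : Fin t → Finset V
  verts_inj : Function.Injective verts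
  edges_inj : Function.Injective edges
  edges_mem : ∀ i, edges i ∈ H
  fst_mem : ∀ i, verts i ∈ edges i
  snd_mem : ∀ i : Fin t, verts ⟨(i.val + 1) % t, Nat.mod_lt _ i.pos⟩ ∈ edges i

/-- `u` and `v` are joined by a Berge-path of `H`. -/
def BergeReachable {V : Type*} (H : Finset (Finset V)) (u v : V) : Prop :=
  ∃ t, ∃ P : BergePath H t, P.verts 0 = u ∧ P.verts (Fin.last t) = v

/-- A hypergraph on the vertex type `V` is connected if any two vertices are joined
by a Berge-path. -/
def HConnected {V : Type*} (H : Finset (Finset V)) : Prop :=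
  ∀ u v : V, u ≠ v → BergeReachable H u v

/-- The degree of a vertex: the number of hyperedges containing it. -/
noncomputable def hdeg {V : Type*} (H : Finset (Finset V)) (v : V) : ℕ :=
  (H.filter (fun e => v ∈ e)).card

/-- The vertex neighborhood of `v` in `H`. -/
noncomputable def nbhd {V : Type*} [Fintype V] (H : Finset (Finset V)) (v : V) : Finset V :=
  Finset.univ.filter (fun u => u ≠ v ∧ ∃ e ∈ H, v ∈ e ∧ u ∈ e)

/-- The sub-hypergraph induced by a set `S` of vertices: all hyperedges lying inside `S`. -/
noncomputable def restrictTo {V : Type*} (H : Finset (Finset V)) (S : Finset V) :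
    Finset (Finset V) :=
  H.filter (fun e => e ⊆ S)

/-- `DelProcess H D S T` : starting from the vertex set `S`, the vertex set `T` can be
reached by repeatedly deleting a vertex whose degree in the current induced
sub-hypergraph is less than `D` (together with all hyperedges containing it). -/
inductive DelProcess {V : Type*} (H : Finset (Finset V)) (D : ℕ) :
    Finset V → Finset V → Prop
  | refl (S : Finset V) : DelProcess H D S S
  | step (S T : Finset V) (v : V) (hv : v ∈ S)
      (hd : hdeg (restrictTo H S) v < D)
      (h : DelProcess H D (S.erase v) T) : DelProcess H D S T

/-- The edge family of `H_{n,k}` for odd `k`, on vertex set `S` with kernel `A`: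
all `r`-subsets of `S` having at most one vertex outside `A`. -/
noncomputable def HnkFamilyOdd {V : Type*} (r : ℕ) (S A : Finset V) : Finset (Finset V) :=
  S.powerset.filter (fun s => s.card = r ∧ (s \ A).card ≤ 1)

/-- The edge family of `H_{n,k}` for even `k`: additionally all `r`-subsets consisting of
`b1`, `b2` and `r-2` vertices of `A`. -/
noncomputable def HnkFamilyEven {V : Type*} (r : ℕ) (S A : Finset V) (b1 b2 : V) :
    Finset (Finset V) :=
  S.powerset.filter (fun s => s.card = r ∧ ((s \ A).card ≤ 1 ∨ s \ A = {b1, b2}))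

/-- `H` is (a copy of) the extremal hypergraph `H_{m,k}` on the vertex set `S`
(where `m = |S|`). Note that `⌊(k-1)/2⌋` equals `(k-1)/2` in ℕ for odd `k`,
and `(k-2)/2` for even `k`. -/
def IsHnkOn {V : Type*} (r k : ℕ) (S : Finset V) (H : Finset (Finset V)) : Prop :=
  ∃ A ⊆ S, A.card = (k - 1) / 2 ∧
    ((Odd k ∧ H = HnkFamilyOdd r S A) ∨
     (Even k ∧ ∃ b1 ∈ S \ A, ∃ b2 ∈ S \ A, b1 ≠ b2 ∧ H = HnkFamilyEven r S A b1 b2))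

/-- The extremal number of hyperedges:
`C(⌊(k-1)/2⌋, r-1)·(n − ⌊(k-1)/2⌋) + C(⌊(k-1)/2⌋, r) + [2 ∣ k]·C(⌊(k-1)/2⌋, r-2)`. -/
def extremalCount (r k n : ℕ) : ℕ :=
  ((k - 1) / 2).choose (r - 1) * (n - (k - 1) / 2) + ((k - 1) / 2).choose r +
    (if 2 ∣ k then ((k - 1) / 2).choose (r - 2) else 0)

/-- The threshold `N_{k,r}`. -/
def Nkr (r k : ℕ) : ℕ :=
  (r * (k - 1)).choose r + ((k - 1) / 2).choose (r - 1) * ((k - 1) / 2)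
    - ((k - 1) / 2).choose r - (if 2 ∣ k then ((k - 1) / 2).choose (r - 2) else 0)
    + r * (k - 1)

namespace Dgmt

open Finset Function

variable {V : Type*} [DecidableEq V]

/-- From a cyclic structure of length r+1 together with an extra edge `E` containing a
vertex `w` off the cycle and the cycle vertex `d 0`, build a Berge path of length r+1. -/
lemma cyc_path {r : ℕ} (hr : 3 ≤ r) (F : Finset (Finset V))
    (d : Fin (r+1) → V) (k : Fin (r+1) → Finset V)
    (hdinj : Function.Injective d) (hkinj : Function.Injective k)
    (hkF : ∀ t, k t ∈ F) (hdk : ∀ t, d t ∈ k t) (hcyc : ∀ t, d (t+1) ∈ k t)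
    (E : Finset V) (hEF : E ∈ F) (w : V) (hwE : w ∈ E) (hwd : ∀ t, w ≠ d t)
    (hd0E : d 0 ∈ E) (hEk : ∀ t : Fin (r+1), t.val < r → E ≠ k t) :
    Nonempty (BergePath F (r+1)) := by
  have h1v : ∀ i : Fin (r+1), ((i + 1 : Fin (r+1))).val = (i.val + 1) % (r+1) := by
    intro i
    rw [Fin.val_add, Fin.val_one', Nat.mod_eq_of_lt (show 1 < r+1 by omega)]
  refine ⟨⟨fun t : Fin (r+2) => if h0 : t.val = 0 then w else d ⟨t.val - 1, by omega⟩,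
    fun t : Fin (r+1) => if t.val = 0 then E else k ⟨t.val - 1, by omega⟩, ?_, ?_, ?_, ?_, ?_⟩⟩
  · intro a b hab
    dsimp only at hab
    by_cases ha : a.val = 0 <;> by_cases hb : b.val = 0
    · exact Fin.ext (by omega)
    · rw [dif_pos ha, dif_neg hb] at hab; exact absurd hab (hwd _)
    · rw [dif_neg ha, dif_pos hb] at hab; exact absurd hab.symm (hwd _)
    · rw [dif_neg ha, dif_neg hb] at hab
      have h2 := congrArg Fin.val (hdinj hab)
      simp only at h2
      exact Fin.ext (by omega)
  · intro a b hab
    dsimp only at hab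
    by_cases ha : a.val = 0 <;> by_cases hb : b.val = 0
    · exact Fin.ext (by omega)
    · rw [if_pos ha, if_neg hb] at hab
      exact absurd hab (hEk _ (show b.val - 1 < r by omega))
    · rw [if_neg ha, if_pos hb] at hab
      exact absurd hab.symm (hEk _ (show a.val - 1 < r by omega))
    · rw [if_neg ha, if_neg hb] at hab
      have := congrArg Fin.val (hkinj hab)
      simp only at this
      exact Fin.ext (by omega)
  · intro i
    by_cases hi : i.val = 0
    · rw [if_pos hi]; exact hEF
    · rw [if_neg hi]; exact hkF _
  · intro i
    by_cases hi : i.val = 0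
    · have : (i.castSucc).val = 0 := hi
      rw [dif_pos this, if_pos hi]; exact hwE
    · have : (i.castSucc).val ≠ 0 := hi
      rw [dif_neg this, if_neg hi]
      exact hdk _
  · intro i
    have hs : (i.succ).val = i.val + 1 := rfl
    have hns : (i.succ).val ≠ 0 := by omega
    rw [dif_neg hns]
    by_cases hi : i.val = 0
    · rw [if_pos hi]
      have : (⟨i.succ.val - 1, by omega⟩ : Fin (r+1)) = ⟨0, by omega⟩ := by
        apply Fin.ext; simp [hs, hi]
      rw [this]
      have h0 : (⟨0, by omega⟩ : Fin (r+1)) = 0 := rfl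
      rw [h0]; exact hd0E
    · rw [if_neg hi]
      have key := hcyc ⟨i.val - 1, by omega⟩
      have : ((⟨i.val - 1, by omega⟩ : Fin (r+1)) + 1) = ⟨i.succ.val - 1, by omega⟩ := by
        apply Fin.ext
        rw [h1v]
        simp only [hs]
        have hilt : i.val < r + 1 := i.isLt
        have : (i.val - 1 + 1) = i.val := by omega
        rw [this, Nat.mod_eq_of_lt (by omega)]
        omega
      rw [← this]
      exact key

def NoSplit (F : Finset (Finset V)) : Prop :=
  ∀ F1 F2 : Finset (Finset V), F1 ∪ F2 = F →
    Disjoint (F1.biUnion id) (F2.biUnion id) → F1.Nonempty → F2.Nonempty → False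

lemma cyc_lemma {r : ℕ} (hr : 3 ≤ r) (F : Finset (Finset V))
    (hpath : IsEmpty (BergePath F (r+1)))
    (d : Fin (r+1) → V) (k : Fin (r+1) → Finset V)
    (hdinj : Function.Injective d) (hkinj : Function.Injective k)
    (hkF : ∀ t, k t ∈ F) (hdk : ∀ t, d t ∈ k t) (hcyc : ∀ t, d (t+1) ∈ k t)
    (hbig : r + 2 ≤ (F.biUnion id).card) (hns : NoSplit F) : False := by
  classical
  set D : Finset V := Finset.image d Finset.univ with hD
  have hDcard : D.card ≤ r + 1 := le_trans Finset.card_image_le (by simp)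
  have hDex : ∃ u ∈ F.biUnion id, u ∉ D := by
    by_contra hno
    push_neg at hno
    have hsub : F.biUnion id ⊆ D := hno
    have := Finset.card_le_card hsub
    omega
  have hstick : ∃ h ∈ F, ¬ h ⊆ D ∧ ∃ x ∈ h, x ∈ D := by
    by_contra hnost
    push_neg at hnost
    refine hns (F.filter (fun e => e ⊆ D)) (F.filter (fun e => ¬ e ⊆ D))
      (Finset.filter_union_filter_not_eq _ F) ?_ ?_ ?_
    · rw [Finset.disjoint_left]
      intro a ha1 ha2
      rw [Finset.mem_biUnion] at ha1 ha2
      obtain ⟨e1, he1, hae1⟩ := ha1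
      obtain ⟨e2, he2, hae2⟩ := ha2
      rw [Finset.mem_filter] at he1 he2
      exact hnost e2 he2.1 he2.2 a hae2 (he1.2 hae1)
    · refine ⟨k 0, Finset.mem_filter.mpr ⟨hkF 0, ?_⟩⟩
      by_contra hsub
      exact hnost (k 0) (hkF 0) hsub (d 0) (hdk 0)
        (Finset.mem_image_of_mem d (Finset.mem_univ 0))
    · obtain ⟨u, huV, huD⟩ := hDex
      rw [Finset.mem_biUnion] at huV
      obtain ⟨e, heF, hue⟩ := huV
      exact ⟨e, Finset.mem_filter.mpr ⟨heF, fun hsub => huD (hsub hue)⟩⟩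
  obtain ⟨h, hhF, hnsub, x, hxh, hxD⟩ := hstick
  obtain ⟨wst, hwsth, hwstD⟩ := Finset.not_subset.mp hnsub
  have haddone : ∀ t : Fin (r+1), t + 1 = 0 → t.val = r := by
    intro t ht
    have := congrArg Fin.val ht
    rw [Fin.val_add, Fin.val_one', Nat.mod_eq_of_lt (show 1 < r+1 by omega)] at this
    simp only [Fin.val_zero] at this
    have h2 : t.val < r + 1 := t.isLt
    rcases Nat.lt_or_ge (t.val + 1) (r+1) with hlt | hge
    · rw [Nat.mod_eq_of_lt hlt] at this; omega
    · omega
  by_cases hhk : ∃ t0, h = k t0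
  · obtain ⟨t0, rfl⟩ := hhk
    have hwstd : ∀ t : Fin (r+1), wst ≠ d (t + (t0 + 1)) := fun t heq =>
      hwstD (heq ▸ Finset.mem_image_of_mem d (Finset.mem_univ _))
    have key := cyc_path hr F (fun u => d (u + (t0 + 1))) (fun u => k (u + (t0 + 1)))
      (fun a b hab => add_right_cancel (hdinj hab))
      (fun a b hab => add_right_cancel (hkinj hab))
      (fun t => hkF _) (fun t => hdk _)
      (fun t => by
        show d (t + 1 + (t0 + 1)) ∈ k (t + (t0 + 1))
        rw [add_right_comm t 1 (t0 + 1)]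
        exact hcyc (t + (t0 + 1)))
      (k t0) hhF wst hwsth hwstd
      (by
        show d (0 + (t0 + 1)) ∈ k t0
        rw [zero_add]
        exact hcyc t0)
      (by
        intro t ht heq
        have h1 := hkinj heq
        have hrearr : t + (t0 + 1) = (t + 1) + t0 := by rw [add_comm t0 1, ← add_assoc]
        have h1'' : (0 : Fin (r+1)) + t0 = (t + 1) + t0 := by
          rw [zero_add, ← hrearr, ← h1]
        have h3 : (0 : Fin (r+1)) = t + 1 := add_right_cancel h1''
        have := haddone t h3.symm
        omega)
    exact hpath.false key.some
  · push_neg at hhk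
    obtain ⟨t1, _, hdt1⟩ := Finset.mem_image.mp hxD
    have hwstd : ∀ t : Fin (r+1), wst ≠ d (t + t1) := fun t heq =>
      hwstD (heq ▸ Finset.mem_image_of_mem d (Finset.mem_univ _))
    have key := cyc_path hr F (fun u => d (u + t1)) (fun u => k (u + t1))
      (fun a b hab => add_right_cancel (hdinj hab))
      (fun a b hab => add_right_cancel (hkinj hab))
      (fun t => hkF _) (fun t => hdk _)
      (fun t => by
        show d (t + 1 + t1) ∈ k (t + t1)
        rw [add_right_comm t 1 t1]
        exact hcyc (t + t1))
      h hhF wst hwsth hwstd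
      (by
        show d (0 + t1) ∈ h
        rw [zero_add, hdt1]
        exact hxh)
      (fun t _ => hhk (t + t1))
    exact hpath.false key.some

lemma rcyc_lemma {r : ℕ} (hr : 3 ≤ r) (F : Finset (Finset V))
    (hpath : IsEmpty (BergePath F (r+1)))
    (huni : ∀ e ∈ F, e.card = r)
    (M : V → Finset V)
    (hM1 : ∀ v ∈ F.biUnion id, v ∈ M v)
    (hM2 : ∀ v ∈ F.biUnion id, M v ∈ F)
    (hM3 : ∀ u ∈ F.biUnion id, ∀ v ∈ F.biUnion id, M u = M v → u = v)
    (c : Fin r → V) (hcinj : Function.Injective c)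
    (hcsupp : ∀ s, c s ∈ F.biUnion id)
    (hQ0 : ∀ s : Fin r, c ⟨(s.val + 1) % r, Nat.mod_lt _ (by omega)⟩ ∈ M (c s))
    (hbig : r + 2 ≤ (F.biUnion id).card)
    (hns : NoSplit F) : False := by
  classical
  haveI : NeZero r := ⟨by omega⟩
  have h1r : (1 : Fin r).val = 1 := by
    rw [Fin.val_one']; exact Nat.mod_eq_of_lt (by omega)
  have haddv : ∀ s : Fin r, ((s + 1 : Fin r)).val = (s.val + 1) % r := by
    intro s; rw [Fin.val_add, h1r]
  have hQ : ∀ s : Fin r, c (s + 1) ∈ M (c s) := by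
    intro s
    have heq : (s + 1 : Fin r) = ⟨(s.val + 1) % r, Nat.mod_lt _ (by omega)⟩ :=
      Fin.ext (haddv s)
    rw [heq]
    exact hQ0 s
  have hmodinj : ∀ x y : ℕ, 1 ≤ x → x ≤ r → 1 ≤ y → y ≤ r → x % r = y % r → x = y := by
    intro x y h1 h2 h3 h4 h5
    rcases eq_or_lt_of_le h2 with rfl|hx
    · rcases eq_or_lt_of_le h4 with h|hy
      · omega
      · rw [Nat.mod_self, Nat.mod_eq_of_lt hy] at h5; omega
    · rcases eq_or_lt_of_le h4 with h|hy
      · subst h; rw [Nat.mod_self, Nat.mod_eq_of_lt hx] at h5; omega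
      · rw [Nat.mod_eq_of_lt hx, Nat.mod_eq_of_lt hy] at h5; omega
  set C : Finset V := Finset.image c Finset.univ with hC
  have hCcard : C.card = r := by
    rw [Finset.card_image_of_injective _ hcinj, Finset.card_univ, Fintype.card_fin]
  have hex : ∃ i : Fin r, ¬ M (c i) ⊆ C := by
    by_contra hno
    push_neg at hno
    have hall : ∀ i : Fin r, M (c i) = C := by
      intro i
      apply Finset.eq_of_subset_of_card_le (hno i)
      rw [hCcard, huni _ (hM2 _ (hcsupp i))]
    have h01 : c 0 = c 1 := hM3 _ (hcsupp 0) _ (hcsupp 1) (by rw [hall 0, hall 1])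
    have h2 := congrArg Fin.val (hcinj h01)
    rw [h1r, Fin.val_zero] at h2
    omega
  obtain ⟨i, hi⟩ := hex
  obtain ⟨w', hw'M, hw'C⟩ := Finset.not_subset.mp hi
  set c' : Fin r → V := fun s => c (s + i) with hc'def
  have hc'inj : Function.Injective c' := fun a b hab => add_right_cancel (hcinj hab)
  have hc'supp : ∀ s, c' s ∈ F.biUnion id := fun s => hcsupp _
  have hQ' : ∀ s : Fin r, c' (s + 1) ∈ M (c' s) := by
    intro s
    show c (s + 1 + i) ∈ M (c (s + i))
    rw [add_right_comm s 1 i]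
    exact hQ (s + i)
  have hC' : Finset.image c' Finset.univ = C := by
    apply Finset.eq_of_subset_of_card_le
    · intro x hx
      obtain ⟨s, _, rfl⟩ := Finset.mem_image.mp hx
      exact Finset.mem_image_of_mem c (Finset.mem_univ _)
    · rw [hCcard, Finset.card_image_of_injective _ hc'inj, Finset.card_univ, Fintype.card_fin]
  have hc'0 : c' 0 = c i := by show c (0 + i) = c i; rw [zero_add]
  rw [← hc'0] at hw'M
  have hw'ne : ∀ s, w' ≠ c' s := by
    intro s heq
    exact hw'C (by rw [heq, ← hC']; exact Finset.mem_image_of_mem c' (Finset.mem_univ s))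
  have hw'supp : w' ∈ F.biUnion id :=
    Finset.mem_biUnion.mpr ⟨M (c' 0), hM2 _ (hc'supp 0), hw'M⟩
  have hcmem : ∀ s : Fin r, c' s ∈ C := by
    intro s; rw [← hC']; exact Finset.mem_image_of_mem c' (Finset.mem_univ s)
  by_cases hzex : ∃ z ∈ M w', z ∉ C ∧ z ≠ w'
  · -- extension to a Berge path of length r+1
    obtain ⟨z, hzM, hzC, hzw⟩ := hzex
    have hznec : ∀ s, z ≠ c' s := fun s heq => hzC (heq ▸ hcmem s)
    refine hpath.false
      ⟨fun t : Fin (r+2) => if t.val = 0 then z else if t.val = 1 then w'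
          else c' ⟨(t.val - 1) % r, Nat.mod_lt _ (by omega)⟩,
        fun t : Fin (r+1) => if t.val = 0 then M w' else M (c' ⟨t.val - 1, by omega⟩),
        ?_, ?_, ?_, ?_, ?_⟩
    · intro a b hab
      dsimp only at hab
      by_cases ha0 : a.val = 0 <;> by_cases hb0 : b.val = 0
      · exact Fin.ext (by omega)
      · rw [if_pos ha0, if_neg hb0] at hab
        by_cases hb1 : b.val = 1
        · rw [if_pos hb1] at hab; exact absurd hab hzw
        · rw [if_neg hb1] at hab; exact absurd hab (hznec _)
      · rw [if_neg ha0, if_pos hb0] at hab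
        by_cases ha1 : a.val = 1
        · rw [if_pos ha1] at hab; exact absurd hab.symm hzw
        · rw [if_neg ha1] at hab; exact absurd hab.symm (hznec _)
      · rw [if_neg ha0, if_neg hb0] at hab
        by_cases ha1 : a.val = 1 <;> by_cases hb1 : b.val = 1
        · exact Fin.ext (by omega)
        · rw [if_pos ha1, if_neg hb1] at hab; exact absurd hab (hw'ne _)
        · rw [if_neg ha1, if_pos hb1] at hab; exact absurd hab.symm (hw'ne _)
        · rw [if_neg ha1, if_neg hb1] at hab
          have h2 := congrArg Fin.val (hc'inj hab)
          simp only at h2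
          have ha2 : a.val < r + 2 := a.isLt
          have hb2 : b.val < r + 2 := b.isLt
          have := hmodinj (a.val - 1) (b.val - 1) (by omega) (by omega) (by omega) (by omega) h2
          exact Fin.ext (by omega)
    · intro a b hab
      dsimp only at hab
      by_cases ha0 : a.val = 0 <;> by_cases hb0 : b.val = 0
      · exact Fin.ext (by omega)
      · rw [if_pos ha0, if_neg hb0] at hab
        exact absurd (hM3 _ hw'supp _ (hc'supp _) hab) (hw'ne _)
      · rw [if_neg ha0, if_pos hb0] at hab
        exact absurd (hM3 _ (hc'supp _) _ hw'supp hab).symm (hw'ne _)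
      · rw [if_neg ha0, if_neg hb0] at hab
        have h2 := congrArg Fin.val (hc'inj (hM3 _ (hc'supp _) _ (hc'supp _) hab))
        simp only at h2
        exact Fin.ext (by omega)
    · intro t
      by_cases ht : t.val = 0
      · rw [if_pos ht]; exact hM2 _ hw'supp
      · rw [if_neg ht]; exact hM2 _ (hc'supp _)
    · intro t
      have hcs : (t.castSucc).val = t.val := rfl
      by_cases ht : t.val = 0
      · rw [if_pos (show (t.castSucc).val = 0 from ht), if_pos ht]
        exact hzM
      · rw [if_neg (show (t.castSucc).val ≠ 0 from ht), if_neg ht]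
        by_cases ht1 : t.val = 1
        · rw [if_pos (show (t.castSucc).val = 1 from ht1)]
          have : (⟨t.val - 1, by omega⟩ : Fin r) = 0 := by
            apply Fin.ext; simp [ht1]
          rw [this]
          exact hw'M
        · rw [if_neg (show (t.castSucc).val ≠ 1 from ht1)]
          have hteq : (⟨(t.castSucc.val - 1) % r, Nat.mod_lt _ (by omega)⟩ : Fin r)
              = ⟨t.val - 1, by omega⟩ := by
            apply Fin.ext
            simp only [hcs]
            exact Nat.mod_eq_of_lt (by omega)
          rw [hteq]
          exact hM1 _ (hc'supp _)
    · intro t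
      have hsv : (t.succ).val = t.val + 1 := rfl
      have hsne : (t.succ).val ≠ 0 := by omega
      rw [if_neg hsne]
      by_cases ht : t.val = 0
      · rw [if_pos ht, if_pos (show (t.succ).val = 1 by omega)]
        exact hM1 _ hw'supp
      · rw [if_neg ht, if_neg (show (t.succ).val ≠ 1 by omega)]
        have key := hQ' ⟨t.val - 1, by omega⟩
        have hidx : ((⟨t.val - 1, by omega⟩ : Fin r) + 1)
            = ⟨(t.succ.val - 1) % r, Nat.mod_lt _ (by omega)⟩ := by
          apply Fin.ext
          rw [haddv]
          simp only [hsv]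
          congr 1
          omega
        rw [← hidx]
        exact key
  · push_neg at hzex
    by_cases hα : c' 0 ∈ M w'
    · -- α-cycle of length r+1
      refine cyc_lemma hr F hpath
        (fun t : Fin (r+1) => if ht : t.val < r then (if t.val = 0 then w' else c' ⟨t.val, ht⟩)
          else c' 0)
        (fun t : Fin (r+1) => if ht : t.val < r then M (c' ⟨t.val, ht⟩) else M w')
        ?_ ?_ ?_ ?_ ?_ hbig hns
      · intro a b hab
        dsimp only at hab
        by_cases ha : a.val < r <;> by_cases hb : b.val < r
        · rw [dif_pos ha, dif_pos hb] at hab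
          by_cases ha0 : a.val = 0 <;> by_cases hb0 : b.val = 0
          · exact Fin.ext (by omega)
          · rw [if_pos ha0, if_neg hb0] at hab; exact absurd hab (hw'ne _)
          · rw [if_neg ha0, if_pos hb0] at hab; exact absurd hab.symm (hw'ne _)
          · rw [if_neg ha0, if_neg hb0] at hab
            have h2 := congrArg Fin.val (hc'inj hab)
            simp only at h2
            exact Fin.ext (by omega)
        · rw [dif_pos ha, dif_neg hb] at hab
          by_cases ha0 : a.val = 0
          · rw [if_pos ha0] at hab; exact absurd hab (hw'ne _)
          · rw [if_neg ha0] at hab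
            have h2 := congrArg Fin.val (hc'inj hab)
            rw [Fin.val_zero] at h2
            simp only at h2
            omega
        · rw [dif_neg ha, dif_pos hb] at hab
          by_cases hb0 : b.val = 0
          · rw [if_pos hb0] at hab; exact absurd hab.symm (hw'ne _)
          · rw [if_neg hb0] at hab
            have h2 := congrArg Fin.val (hc'inj hab)
            rw [Fin.val_zero] at h2
            simp only at h2
            omega
        · exact Fin.ext (by omega)
      · intro a b hab
        dsimp only at hab
        by_cases ha : a.val < r <;> by_cases hb : b.val < r
        · rw [dif_pos ha, dif_pos hb] at hab
          have h2 := congrArg Fin.val (hc'inj (hM3 _ (hc'supp _) _ (hc'supp _) hab))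
          simp only at h2
          exact Fin.ext (by omega)
        · rw [dif_pos ha, dif_neg hb] at hab
          exact absurd (hM3 _ (hc'supp _) _ hw'supp hab).symm (hw'ne _)
        · rw [dif_neg ha, dif_pos hb] at hab
          exact absurd (hM3 _ hw'supp _ (hc'supp _) hab) (hw'ne _)
        · exact Fin.ext (by omega)
      · intro t
        by_cases ht : t.val < r
        · rw [dif_pos ht]; exact hM2 _ (hc'supp _)
        · rw [dif_neg ht]; exact hM2 _ hw'supp
      · intro t
        by_cases ht : t.val < r
        · rw [dif_pos ht, dif_pos ht]
          by_cases ht0 : t.val = 0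
          · rw [if_pos ht0]
            have : (⟨t.val, ht⟩ : Fin r) = 0 := Fin.ext ht0
            rw [this]
            exact hw'M
          · rw [if_neg ht0]
            exact hM1 _ (hc'supp _)
        · rw [dif_neg ht, dif_neg ht]
          exact hα
      · intro t
        by_cases ht : t.val < r
        · rw [dif_pos ht]
          have hs1 : (t + 1 : Fin (r+1)).val = t.val + 1 := by
            rw [Fin.val_add, Fin.val_one', Nat.mod_eq_of_lt (show 1 < r + 1 by omega),
              Nat.mod_eq_of_lt (by omega)]
          by_cases ht1 : t.val + 1 < r
          · rw [dif_pos (show (t + 1 : Fin (r+1)).val < r from hs1 ▸ ht1),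
              if_neg (show ¬ (t + 1 : Fin (r+1)).val = 0 by omega)]
            have key := hQ' ⟨t.val, ht⟩
            have hidx : ((⟨t.val, ht⟩ : Fin r) + 1)
                = ⟨(t + 1 : Fin (r+1)).val, hs1 ▸ ht1⟩ := by
              apply Fin.ext
              rw [haddv]
              simp only [hs1]
              exact Nat.mod_eq_of_lt (by omega)
            rw [← hidx]
            exact key
          · rw [dif_neg (show ¬ (t + 1 : Fin (r+1)).val < r by omega)]
            have key := hQ' ⟨t.val, ht⟩
            have hidx : ((⟨t.val, ht⟩ : Fin r) + 1) = 0 := by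
              apply Fin.ext
              rw [haddv]
              simp only [Fin.val_zero]
              have : t.val + 1 = r := by omega
              rw [this, Nat.mod_self]
            rw [← hidx]
            exact key
        · have ht' : t.val = r := by have := t.isLt; omega
          have hs0 : (t + 1 : Fin (r+1)) = 0 := by
            apply Fin.ext
            rw [Fin.val_add, Fin.val_one', Nat.mod_eq_of_lt (show 1 < r + 1 by omega), ht']
            simp
          rw [hs0, dif_neg ht]
          rw [dif_pos (show (0 : Fin (r+1)).val < r by simp; omega)]
          rw [if_pos (show (0 : Fin (r+1)).val = 0 from rfl)]
          exact hM1 _ hw'supp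
    · by_cases hβ : c' 1 ∈ M w'
      · -- β-cycle of length r+1
        refine cyc_lemma hr F hpath
          (fun t : Fin (r+1) => if ht : t.val < r then (if t.val = 0 then w' else c' ⟨t.val, ht⟩)
            else c' 0)
          (fun t : Fin (r+1) => if ht : t.val < r then (if t.val = 0 then M w'
            else M (c' ⟨t.val, ht⟩)) else M (c' 0))
          ?_ ?_ ?_ ?_ ?_ hbig hns
        · intro a b hab
          dsimp only at hab
          by_cases ha : a.val < r <;> by_cases hb : b.val < r
          · rw [dif_pos ha, dif_pos hb] at hab
            by_cases ha0 : a.val = 0 <;> by_cases hb0 : b.val = 0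
            · exact Fin.ext (by omega)
            · rw [if_pos ha0, if_neg hb0] at hab; exact absurd hab (hw'ne _)
            · rw [if_neg ha0, if_pos hb0] at hab; exact absurd hab.symm (hw'ne _)
            · rw [if_neg ha0, if_neg hb0] at hab
              have h2 := congrArg Fin.val (hc'inj hab)
              simp only at h2
              exact Fin.ext (by omega)
          · rw [dif_pos ha, dif_neg hb] at hab
            by_cases ha0 : a.val = 0
            · rw [if_pos ha0] at hab; exact absurd hab (hw'ne _)
            · rw [if_neg ha0] at hab
              have h2 := congrArg Fin.val (hc'inj hab)
              rw [Fin.val_zero] at h2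
              simp only at h2
              omega
          · rw [dif_neg ha, dif_pos hb] at hab
            by_cases hb0 : b.val = 0
            · rw [if_pos hb0] at hab; exact absurd hab.symm (hw'ne _)
            · rw [if_neg hb0] at hab
              have h2 := congrArg Fin.val (hc'inj hab)
              rw [Fin.val_zero] at h2
              simp only at h2
              omega
          · exact Fin.ext (by omega)
        · intro a b hab
          dsimp only at hab
          by_cases ha : a.val < r <;> by_cases hb : b.val < r
          · rw [dif_pos ha, dif_pos hb] at hab
            by_cases ha0 : a.val = 0 <;> by_cases hb0 : b.val = 0
            · exact Fin.ext (by omega)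
            · rw [if_pos ha0, if_neg hb0] at hab
              exact absurd (hM3 _ hw'supp _ (hc'supp _) hab) (hw'ne _)
            · rw [if_neg ha0, if_pos hb0] at hab
              exact absurd (hM3 _ (hc'supp _) _ hw'supp hab).symm (hw'ne _)
            · rw [if_neg ha0, if_neg hb0] at hab
              have h2 := congrArg Fin.val (hc'inj (hM3 _ (hc'supp _) _ (hc'supp _) hab))
              simp only at h2
              exact Fin.ext (by omega)
          · rw [dif_pos ha, dif_neg hb] at hab
            by_cases ha0 : a.val = 0
            · rw [if_pos ha0] at hab
              exact absurd (hM3 _ hw'supp _ (hc'supp _) hab) (hw'ne _)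
            · rw [if_neg ha0] at hab
              have h2 := congrArg Fin.val (hc'inj (hM3 _ (hc'supp _) _ (hc'supp _) hab))
              rw [Fin.val_zero] at h2
              simp only at h2
              omega
          · rw [dif_neg ha, dif_pos hb] at hab
            by_cases hb0 : b.val = 0
            · rw [if_pos hb0] at hab
              exact absurd (hM3 _ (hc'supp _) _ hw'supp hab).symm (hw'ne _)
            · rw [if_neg hb0] at hab
              have h2 := congrArg Fin.val (hc'inj (hM3 _ (hc'supp _) _ (hc'supp _) hab))
              rw [Fin.val_zero] at h2
              simp only at h2
              omega
          · exact Fin.ext (by omega)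
        · intro t
          by_cases ht : t.val < r
          · rw [dif_pos ht]
            by_cases ht0 : t.val = 0
            · rw [if_pos ht0]; exact hM2 _ hw'supp
            · rw [if_neg ht0]; exact hM2 _ (hc'supp _)
          · rw [dif_neg ht]; exact hM2 _ (hc'supp _)
        · intro t
          by_cases ht : t.val < r
          · rw [dif_pos ht, dif_pos ht]
            by_cases ht0 : t.val = 0
            · rw [if_pos ht0, if_pos ht0]
              exact hM1 _ hw'supp
            · rw [if_neg ht0, if_neg ht0]
              exact hM1 _ (hc'supp _)
          · rw [dif_neg ht, dif_neg ht]
            exact hM1 _ (hc'supp 0)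
        · intro t
          by_cases ht : t.val < r
          · rw [dif_pos ht]
            have hs1 : (t + 1 : Fin (r+1)).val = t.val + 1 := by
              rw [Fin.val_add, Fin.val_one', Nat.mod_eq_of_lt (show 1 < r + 1 by omega),
                Nat.mod_eq_of_lt (by omega)]
            by_cases ht0 : t.val = 0
            · rw [if_pos ht0]
              rw [dif_pos (show (t + 1 : Fin (r+1)).val < r by omega),
                if_neg (show ¬ (t + 1 : Fin (r+1)).val = 0 by omega)]
              have : (⟨(t + 1 : Fin (r+1)).val, by omega⟩ : Fin r) = 1 := by
                apply Fin.ext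
                rw [h1r]
                simp only [hs1]
                omega
              rw [this]
              exact hβ
            · rw [if_neg ht0]
              by_cases ht1 : t.val + 1 < r
              · rw [dif_pos (show (t + 1 : Fin (r+1)).val < r from hs1 ▸ ht1),
                  if_neg (show ¬ (t + 1 : Fin (r+1)).val = 0 by omega)]
                have key := hQ' ⟨t.val, ht⟩
                have hidx : ((⟨t.val, ht⟩ : Fin r) + 1)
                    = ⟨(t + 1 : Fin (r+1)).val, hs1 ▸ ht1⟩ := by
                  apply Fin.ext
                  rw [haddv]
                  simp only [hs1]
                  exact Nat.mod_eq_of_lt (by omega)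
                rw [← hidx]
                exact key
              · rw [dif_neg (show ¬ (t + 1 : Fin (r+1)).val < r by omega)]
                have key := hQ' ⟨t.val, ht⟩
                have hidx : ((⟨t.val, ht⟩ : Fin r) + 1) = 0 := by
                  apply Fin.ext
                  rw [haddv]
                  simp only [Fin.val_zero]
                  have : t.val + 1 = r := by omega
                  rw [this, Nat.mod_self]
                rw [← hidx]
                exact key
          · have ht' : t.val = r := by have := t.isLt; omega
            have hs0 : (t + 1 : Fin (r+1)) = 0 := by
              apply Fin.ext
              rw [Fin.val_add, Fin.val_one', Nat.mod_eq_of_lt (show 1 < r + 1 by omega), ht']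
              simp
            rw [hs0, dif_neg ht]
            rw [dif_pos (show (0 : Fin (r+1)).val < r by simp; omega)]
            rw [if_pos (show (0 : Fin (r+1)).val = 0 from rfl)]
            exact hw'M
      · -- counting contradiction
        have hc01 : c' 0 ≠ c' 1 := by
          intro heq
          have h2 := congrArg Fin.val (hc'inj heq)
          rw [h1r, Fin.val_zero] at h2
          omega
        have hsub : M w' ⊆ (C ∪ {w'}) \ {c' 0, c' 1} := by
          intro z hzM
          rw [Finset.mem_sdiff, Finset.mem_union, Finset.mem_singleton]
          constructor
          · by_cases hzc : z ∈ C
            · exact Or.inl hzc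
            · exact Or.inr (hzex z hzM hzc)
          · intro hmem
            rw [Finset.mem_insert, Finset.mem_singleton] at hmem
            rcases hmem with rfl | rfl
            · exact hα hzM
            · exact hβ hzM
        have hcard1 : ({c' 0, c' 1} : Finset V) ⊆ C ∪ {w'} := by
          intro z hz
          rw [Finset.mem_insert, Finset.mem_singleton] at hz
          rcases hz with rfl | rfl
          · exact Finset.mem_union_left _ (hcmem 0)
          · exact Finset.mem_union_left _ (hcmem 1)
        have hcard2 : (C ∪ {w'}).card = r + 1 := by
          rw [Finset.card_union_of_disjoint (Finset.disjoint_singleton_right.mpr hw'C),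
            hCcard, Finset.card_singleton]
        have hcard3 : ((C ∪ {w'}) \ {c' 0, c' 1}).card = r - 1 := by
          rw [Finset.card_sdiff_of_subset hcard1, hcard2, Finset.card_pair hc01]
          omega
        have hcard4 : (M w').card = r := huni _ (hM2 _ hw'supp)
        have := Finset.card_le_card hsub
        rw [hcard3, hcard4] at this
        omega

set_option maxHeartbeats 1000000 in
lemma main_lemma {r : ℕ} (hr : 3 ≤ r) :
    ∀ F : Finset (Finset V), (∀ e ∈ F, e.card = r) →
      IsEmpty (BergePath F (r+1)) → F.card ≤ (F.biUnion id).card := by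
  classical
  intro F
  induction F using Finset.strongInduction with
  | _ F IH =>
  intro huni hpath
  by_contra hcon
  push_neg at hcon
  have hmono : ∀ G : Finset (Finset V), G ⊆ F → IsEmpty (BergePath G (r+1)) := by
    intro G hG
    exact ⟨fun P => hpath.false ⟨P.verts, P.edges, P.verts_inj, P.edges_inj,
      fun i => hG (P.edges_mem i), P.fst_mem, P.snd_mem⟩⟩
  -- no split
  have hns : NoSplit F := by
    intro F1 F2 hun hdis h1 h2
    have hF1 : F1 ⊆ F := hun ▸ Finset.subset_union_left
    have hF2 : F2 ⊆ F := hun ▸ Finset.subset_union_right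
    have hne : ∀ (G1 G2 : Finset (Finset V)), G1 ∪ G2 = F →
        Disjoint (G1.biUnion id) (G2.biUnion id) → G2.Nonempty → G1 ≠ F := by
      intro G1 G2 hu hd hn2 heq
      obtain ⟨e2, he2⟩ := hn2
      have he2F : e2 ∈ F := (hu ▸ Finset.subset_union_right) he2
      have he2' : e2 ∈ G1 := heq ▸ he2F
      have hcard := huni e2 he2F
      obtain ⟨x, hx⟩ := Finset.card_pos.mp (show 0 < e2.card by omega)
      exact Finset.disjoint_left.mp hd
        (Finset.mem_biUnion.mpr ⟨e2, he2', hx⟩)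
        (Finset.mem_biUnion.mpr ⟨e2, he2, hx⟩)
    have hss1 : F1 ⊂ F := Finset.ssubset_iff_subset_ne.mpr ⟨hF1, hne F1 F2 hun hdis h2⟩
    have hss2 : F2 ⊂ F := by
      refine Finset.ssubset_iff_subset_ne.mpr ⟨hF2, hne F2 F1 ?_ hdis.symm h1⟩
      rw [Finset.union_comm]; exact hun
    have h1c := IH F1 hss1 (fun e he => huni e (hF1 he)) (hmono F1 hF1)
    have h2c := IH F2 hss2 (fun e he => huni e (hF2 he)) (hmono F2 hF2)
    have hcu : F.card ≤ F1.card + F2.card := by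
      rw [← hun]; exact Finset.card_union_le _ _
    have hbu : (F.biUnion id) = (F1.biUnion id) ∪ (F2.biUnion id) := by
      rw [← hun]
      ext a
      simp only [Finset.mem_biUnion, Finset.mem_union]
      constructor
      · rintro ⟨e, he | he, hae⟩
        · exact Or.inl ⟨e, he, hae⟩
        · exact Or.inr ⟨e, he, hae⟩
      · rintro (⟨e, he, hae⟩ | ⟨e, he, hae⟩)
        · exact ⟨e, Or.inl he, hae⟩
        · exact ⟨e, Or.inr he, hae⟩
    have hbc : (F.biUnion id).card = (F1.biUnion id).card + (F2.biUnion id).card := by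
      rw [hbu, Finset.card_union_of_disjoint hdis]
    omega
  -- F nonempty, pick e0
  have hFne : F.Nonempty := Finset.card_pos.mp (by omega)
  obtain ⟨e0, he0⟩ := hFne
  -- Hall
  have hall : ∀ s : Finset {e // e ∈ F.erase e0},
      s.card ≤ (s.biUnion (fun x => x.val)).card := by
    intro s
    have himg : s.image (fun x => x.val) ⊆ F.erase e0 := by
      intro e he
      obtain ⟨x, _, rfl⟩ := Finset.mem_image.mp he
      exact x.2
    have hss : s.image (fun x => x.val) ⊂ F :=
      Finset.ssubset_of_subset_of_ssubset himg (Finset.erase_ssubset he0)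
    have hkey := IH _ hss (fun e he => huni e (subset_of_ssubset hss he))
      (hmono _ (subset_of_ssubset hss))
    have hc1 : (s.image (fun x => x.val)).card = s.card :=
      Finset.card_image_of_injective s Subtype.val_injective
    have hc2 : (s.image (fun x => x.val)).biUnion id = s.biUnion (fun x => x.val) := by
      ext a
      simp [Finset.mem_biUnion, Finset.mem_image]
    rw [hc1, hc2] at hkey
    exact hkey
  obtain ⟨f, hfinj, hfmem⟩ := (Finset.all_card_le_biUnion_card_iff_exists_injective _).mp hall
  have himgsupp : Finset.univ.image f ⊆ F.biUnion id := by
    intro v hv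
    obtain ⟨x, _, rfl⟩ := Finset.mem_image.mp hv
    exact Finset.mem_biUnion.mpr ⟨x.val, Finset.mem_of_mem_erase x.2, hfmem x⟩
  have himgcard : (Finset.univ.image f).card = F.card - 1 := by
    rw [Finset.card_image_of_injective _ hfinj, Finset.card_univ, Fintype.card_coe,
      Finset.card_erase_of_mem he0]
  have hle : (Finset.univ.image f).card ≤ (F.biUnion id).card := Finset.card_le_card himgsupp
  have hFcard : F.card = (F.biUnion id).card + 1 := by omega
  have himgeq : Finset.univ.image f = F.biUnion id :=
    Finset.eq_of_subset_of_card_le himgsupp (by omega)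
  -- the matching M
  have hMex : ∀ v ∈ F.biUnion id, ∃ x : {e // e ∈ F.erase e0}, f x = v := by
    intro v hv
    rw [← himgeq] at hv
    obtain ⟨x, _, hx⟩ := Finset.mem_image.mp hv
    exact ⟨x, hx⟩
  set M : V → Finset V :=
    fun v => if hv : v ∈ F.biUnion id then ((hMex v hv).choose).val else ∅ with hMdef
  have hM1 : ∀ v ∈ F.biUnion id, v ∈ M v := by
    intro v hv
    show v ∈ (if hv' : v ∈ F.biUnion id then ((hMex v hv').choose).val else ∅)
    rw [dif_pos hv]
    have hspec := (hMex v hv).choose_spec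
    have := hfmem ((hMex v hv).choose)
    rwa [hspec] at this
  have hM2 : ∀ v ∈ F.biUnion id, M v ∈ F := by
    intro v hv
    show (if hv' : v ∈ F.biUnion id then ((hMex v hv').choose).val else ∅) ∈ F
    rw [dif_pos hv]
    exact Finset.mem_of_mem_erase ((hMex v hv).choose).2
  have hM3 : ∀ u ∈ F.biUnion id, ∀ v ∈ F.biUnion id, M u = M v → u = v := by
    intro u hu v hv heq
    simp only [hMdef, dif_pos hu, dif_pos hv] at heq
    have h1 := (hMex u hu).choose_spec
    have h2 := (hMex v hv).choose_spec
    rw [← h1, ← h2]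
    exact congrArg f (Subtype.ext heq)
  -- support is large
  have hmr : r + 2 ≤ (F.biUnion id).card := by
    have hsubP : F ⊆ Finset.powersetCard r (F.biUnion id) := by
      intro e he
      rw [Finset.mem_powersetCard]
      exact ⟨fun x hx => Finset.mem_biUnion.mpr ⟨e, he, hx⟩, huni e he⟩
    have hcb := Finset.card_le_card hsubP
    rw [Finset.card_powersetCard] at hcb
    by_contra hlt
    push_neg at hlt
    rcases Nat.lt_or_ge ((F.biUnion id).card) r with h | h
    · rw [Nat.choose_eq_zero_of_lt h] at hcb; omega
    · have hcase : (F.biUnion id).card = r ∨ (F.biUnion id).card = r + 1 := by omega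
      rcases hcase with h' | h'
      · rw [h', Nat.choose_self] at hcb; omega
      · rw [h', Nat.choose_succ_self_right] at hcb; omega
  -- maximal M-path
  obtain ⟨v0, hv0⟩ : (F.biUnion id).Nonempty := Finset.card_pos.mp (by omega)
  set P : ℕ → Prop := fun p => ∃ w : Fin p → V, Function.Injective w ∧
    (∀ k, w k ∈ F.biUnion id) ∧
    ∀ (k : ℕ) (hk : k + 1 < p), w ⟨k+1, hk⟩ ∈ M (w ⟨k, by omega⟩) with hPdef
  have hP1 : P 1 := ⟨fun _ => v0, fun a b _ => Subsingleton.elim a b, fun _ => hv0,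
    fun k hk => absurd hk (by omega)⟩
  have hPb : ∀ p, P p → p ≤ (F.biUnion id).card := by
    intro p hp
    obtain ⟨w, hwi, hws, _⟩ := hp
    have := Finset.card_le_card_of_injOn (s := (Finset.univ : Finset (Fin p)))
      (t := F.biUnion id) w (fun k _ => hws k) hwi.injOn
    simpa using this
  set pm := Nat.findGreatest P ((F.biUnion id).card) with hpmdef
  have hppm : P pm := Nat.findGreatest_spec (hPb 1 hP1) hP1
  have hpmmax : ∀ q, P q → q ≤ pm := fun q hq => Nat.le_findGreatest (hPb q hq) hq
  have hpmub : pm ≤ (F.biUnion id).card := hPb pm hppm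
  obtain ⟨w, hwinj, hwsupp, hwstep⟩ := hppm
  have hpm1 : 1 ≤ pm := hpmmax 1 hP1
  have hMwlF : M (w ⟨pm - 1, by omega⟩) ∈ F := hM2 _ (hwsupp _)
  have hstuck : ∀ u ∈ M (w ⟨pm - 1, by omega⟩), ∃ j : Fin pm, w j = u := by
    by_contra hnos
    push_neg at hnos
    obtain ⟨u, hu, hun⟩ := hnos
    have hP' : P (pm + 1) := by
      refine ⟨fun t => if ht : t.val < pm then w ⟨t.val, ht⟩ else u, ?_, ?_, ?_⟩
      · intro a b hab
        dsimp only at hab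
        by_cases ha : a.val < pm <;> by_cases hb : b.val < pm
        · rw [dif_pos ha, dif_pos hb] at hab
          have h2 : a.val = b.val := congrArg (fun x : Fin pm => x.val) (hwinj hab)
          exact Fin.ext h2
        · rw [dif_pos ha, dif_neg hb] at hab
          exact absurd hab (hun _)
        · rw [dif_neg ha, dif_pos hb] at hab
          exact absurd hab.symm (hun _)
        · have ha' : a.val = pm := by have := a.isLt; omega
          have hb' : b.val = pm := by have := b.isLt; omega
          exact Fin.ext (by omega)
      · intro k
        dsimp only
        by_cases hk : k.val < pm
        · rw [dif_pos hk]; exact hwsupp _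
        · rw [dif_neg hk]; exact Finset.mem_biUnion.mpr ⟨_, hMwlF, hu⟩
      · intro k hk
        dsimp only
        by_cases hk1 : k + 1 < pm
        · rw [dif_pos hk1, dif_pos (show k < pm by omega)]
          exact hwstep k hk1
        · have hk2 : k + 1 = pm := by omega
          rw [dif_neg (show ¬(k + 1 < pm) by omega), dif_pos (show k < pm by omega)]
          have hidx : (⟨k, by omega⟩ : Fin pm) = ⟨pm - 1, by omega⟩ :=
            Fin.ext (show k = pm - 1 by omega)
          rw [hidx]
          exact hu
    have := hpmmax _ hP'
    omega
  have hpmle : pm ≤ r + 1 := by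
    by_contra hgt
    push_neg at hgt
    refine hpath.false ⟨fun t : Fin (r+2) => w ⟨t.val, by omega⟩,
      fun t : Fin (r+1) => M (w ⟨t.val, by omega⟩), ?_, ?_, ?_, ?_, ?_⟩
    · intro a b hab
      have h2 : a.val = b.val := congrArg (fun x : Fin pm => x.val) (hwinj hab)
      exact Fin.ext h2
    · intro a b hab
      have h1 := hM3 _ (hwsupp _) _ (hwsupp _) hab
      have h2 : a.val = b.val := congrArg (fun x : Fin pm => x.val) (hwinj h1)
      exact Fin.ext h2
    · intro t; exact hM2 _ (hwsupp _)
    · intro t; exact hM1 _ (hwsupp _)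
    · intro t
      exact hwstep t.val (by omega)
  -- the minimal return index j0
  have hSne : (Finset.univ.filter (fun j : Fin pm => w j ∈ M (w ⟨pm - 1, by omega⟩))).Nonempty :=
    ⟨⟨pm - 1, by omega⟩, Finset.mem_filter.mpr ⟨Finset.mem_univ _, hM1 _ (hwsupp _)⟩⟩
  set j0 := (Finset.univ.filter (fun j : Fin pm => w j ∈ M (w ⟨pm - 1, by omega⟩))).min' hSne
    with hj0def
  have hj0S := Finset.min'_mem _ hSne
  have hj0w : w j0 ∈ M (w ⟨pm - 1, by omega⟩) := (Finset.mem_filter.mp hj0S).2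
  have hj0min : ∀ j : Fin pm, w j ∈ M (w ⟨pm - 1, by omega⟩) → j0.val ≤ j.val := by
    intro j hj
    exact Fin.le_def.mp (Finset.min'_le _ j (Finset.mem_filter.mpr ⟨Finset.mem_univ _, hj⟩))
  have hML : M (w ⟨pm - 1, by omega⟩) ⊆
      Finset.image (fun s : Fin (pm - j0.val) => w ⟨j0.val + s.val, by omega⟩) Finset.univ := by
    intro u hu
    obtain ⟨j, rfl⟩ := hstuck u hu
    have hge := hj0min j hu
    refine Finset.mem_image.mpr ⟨⟨j.val - j0.val, by omega⟩, Finset.mem_univ _, ?_⟩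
    congr 1
    exact Fin.ext (show j0.val + (j.val - j0.val) = j.val by omega)
  have hLr : r ≤ pm - j0.val := by
    have h1 := Finset.card_le_card hML
    have h3 : (M (w ⟨pm - 1, by omega⟩)).card = r := huni _ hMwlF
    have h4 : (Finset.image (fun s : Fin (pm - j0.val) => w ⟨j0.val + s.val, by omega⟩)
        Finset.univ).card ≤ pm - j0.val := le_trans Finset.card_image_le (by simp)
    omega
  have hj0lt : j0.val < pm := j0.isLt
  rcases (show pm - j0.val = r + 1 ∨ pm - j0.val = r by omega) with hLcase | hLcase
  · -- cycle of length r+1 on the whole path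
    have hj00 : j0.val = 0 := by omega
    have hpmr : pm = r + 1 := by omega
    refine cyc_lemma hr F hpath (fun t : Fin (r+1) => w ⟨t.val, by omega⟩)
      (fun t : Fin (r+1) => M (w ⟨t.val, by omega⟩)) ?_ ?_ ?_ ?_ ?_ hmr hns
    · intro a b hab
      have h2 : a.val = b.val := congrArg (fun x : Fin pm => x.val) (hwinj hab)
      exact Fin.ext h2
    · intro a b hab
      have h1 := hM3 _ (hwsupp _) _ (hwsupp _) hab
      have h2 : a.val = b.val := congrArg (fun x : Fin pm => x.val) (hwinj h1)
      exact Fin.ext h2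
    · intro t; exact hM2 _ (hwsupp _)
    · intro t; exact hM1 _ (hwsupp _)
    · intro t
      by_cases ht : t.val < r
      · have hs1 : (t + 1 : Fin (r+1)).val = t.val + 1 := by
          rw [Fin.val_add, Fin.val_one', Nat.mod_eq_of_lt (show 1 < r + 1 by omega),
            Nat.mod_eq_of_lt (by omega)]
        have key := hwstep t.val (by omega)
        have hidx : (⟨(t + 1 : Fin (r+1)).val, by omega⟩ : Fin pm)
            = ⟨t.val + 1, by omega⟩ := Fin.ext hs1
        rw [hidx]
        exact key
      · have ht' : t.val = r := by have := t.isLt; omega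
        have hs0 : (t + 1 : Fin (r+1)) = 0 := by
          apply Fin.ext
          rw [Fin.val_add, Fin.val_one', Nat.mod_eq_of_lt (show 1 < r + 1 by omega), ht']
          simp
        rw [hs0]
        have hidx1 : (⟨(0 : Fin (r+1)).val, by omega⟩ : Fin pm) = j0 :=
          Fin.ext (show (0 : Fin (r+1)).val = j0.val by rw [Fin.val_zero]; omega)
        have hidx2 : (⟨t.val, by omega⟩ : Fin pm) = ⟨pm - 1, by omega⟩ :=
          Fin.ext (show t.val = pm - 1 by omega)
        rw [hidx1, hidx2]
        exact hj0w
  · -- cycle of length r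
    refine rcyc_lemma hr F hpath huni M hM1 hM2 hM3
      (fun s : Fin r => w ⟨j0.val + s.val, by omega⟩) ?_ ?_ ?_ hmr hns
    · intro a b hab
      have h2 : j0.val + a.val = j0.val + b.val :=
        congrArg (fun x : Fin pm => x.val) (hwinj hab)
      exact Fin.ext (by omega)
    · intro s; exact hwsupp _
    · intro s
      dsimp only
      by_cases hs : s.val + 1 < r
      · have hmod : (s.val + 1) % r = s.val + 1 := Nat.mod_eq_of_lt hs
        have key := hwstep (j0.val + s.val) (by omega)
        have hidx : (⟨j0.val + (s.val + 1) % r, by omega⟩ : Fin pm)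
            = ⟨j0.val + s.val + 1, by omega⟩ :=
          Fin.ext (show j0.val + (s.val + 1) % r = j0.val + s.val + 1 by rw [hmod]; omega)
        rw [hidx]
        exact key
      · have hs' : s.val + 1 = r := by have := s.isLt; omega
        have hmod : (s.val + 1) % r = 0 := by rw [hs', Nat.mod_self]
        have hidx1 : (⟨j0.val + (s.val + 1) % r, by omega⟩ : Fin pm) = j0 :=
          Fin.ext (show j0.val + (s.val + 1) % r = j0.val by rw [hmod]; omega)
        have hidx2 : (⟨j0.val + s.val, by omega⟩ : Fin pm) = ⟨pm - 1, by omega⟩ :=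
          Fin.ext (show j0.val + s.val = pm - 1 by omega)
        rw [hidx1, hidx2]
        exact hj0w

end Dgmt

/-- Davoodi–Győri–Methuku–Tompkins. For `r ≥ 3`, every `r`-uniform
hypergraph on `n` vertices with no Berge-path of length `r+1` has at most `n` hyperedges
(the bound `(n/k)·C(k,r)` with `k = r+1`). -/
theorem davoodi_gyori_methuku_tompkins
    (n r : ℕ) (hr : 3 ≤ r) (H : Finset (Finset (Fin n)))
    (huni : ∀ e ∈ H, e.card = r) (hpath : IsEmpty (BergePath H (r + 1))) :
    H.card ≤ n := by
  classical
  have h := Dgmt.main_lemma (V := Fin n) hr H huni hpath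
  calc H.card ≤ (H.biUnion id).card := h
    _ ≤ (Finset.univ : Finset (Fin n)).card := Finset.card_le_card (Finset.subset_univ _)
    _ = n := by simp
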